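/- (Proposition 1, aligned-preferences case.) Assume d_A ≠ 0, d_B ≠ 0, and d_A·d_B > 0; set κ = d_A/d_B > 0, and for α_B ∈ [0,1) let α_A*(α_B) denote the unique minimizer of L_A(·, α_B) on [0,1). Then: (i) if d_A² ≤ p, then α_A*(α_B) = 0 for every α_B; (ii) if d_A²·(1 − 1/(2κ)) ≥ p and d_A² − λ(α_B)d_A d_B/2 > p, then α_A*(α_B) is the unique solution in (0,1) of f_A(α) = h_A(α_B); (iii) if d_A²·(1 − 1/(2κ)) < p < d_A², then α_A*(α_B) = 0 when λ(α_B) ≥ (2d_A² − 2p)/(d_A d_B), and α_A*(α_B) is the unique solution in (0,1) of f_A(α) = h_A(α_B) when λ(α_B) < (2d_A² − 2p)/(d_A d_B). -/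

import Mathlib

open Set Filter

/-- Team decision formed by the two digital representatives. -/
noncomputable def teamDec (lam : ℝ → ℝ) (thA thB mu : ℝ) (aA aB : ℝ) : ℝ :=
  (lam aA * thA + (1 - lam aA) * mu + lam aB * thB + (1 - lam aB) * mu) / 2

/-- Alice's total loss: preference loss plus communication cost. -/
noncomputable def lossA (lam c : ℝ → ℝ) (thA thB mu : ℝ) (aA aB : ℝ) : ℝ :=
  (thA - teamDec lam thA thB mu aA aB) ^ 2 + c aA

/-- Bob's total loss: preference loss plus communication cost. -/
noncomputable def lossB (lam c : ℝ → ℝ) (thA thB mu : ℝ) (aA aB : ℝ) : ℝ :=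
  (thB - teamDec lam thA thB mu aA aB) ^ 2 + c aB

/-- The function `f_m(α) = λ(α) + (2/d_m²)·c'(α)/λ'(α)`. -/
noncomputable def fFun (lam lam' c' : ℝ → ℝ) (d : ℝ) (α : ℝ) : ℝ :=
  lam α + (2 / d ^ 2) * (c' α / lam' α)

/-- The function `h_m(α) = 2 − λ(α)·d_{−m}/d_m`. -/
noncomputable def hFun (lam : ℝ → ℝ) (dm dOther : ℝ) (α : ℝ) : ℝ :=
  2 - lam α * dOther / dm

/-- `a` is a best response of Alice to Bob's revelation `aB`:
it minimizes `α ↦ L_A(α, aB)` over `[0,1)`. -/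
def IsBestRespA (lam c : ℝ → ℝ) (thA thB mu : ℝ) (a aB : ℝ) : Prop :=
  a ∈ Set.Ico (0:ℝ) 1 ∧
    ∀ x ∈ Set.Ico (0:ℝ) 1, lossA lam c thA thB mu a aB ≤ lossA lam c thA thB mu x aB

/-- Nash equilibrium of the digital representative game. -/
def IsNashEq (lam c : ℝ → ℝ) (thA thB mu : ℝ) (aA aB : ℝ) : Prop :=
  aA ∈ Set.Ico (0:ℝ) 1 ∧ aB ∈ Set.Ico (0:ℝ) 1 ∧
  (∀ α ∈ Set.Ico (0:ℝ) 1, lossA lam c thA thB mu aA aB ≤ lossA lam c thA thB mu α aB) ∧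
  (∀ α ∈ Set.Ico (0:ℝ) 1, lossB lam c thA thB mu aA aB ≤ lossB lam c thA thB mu aA α)


open Topology


/-- Derivative of Alice's loss in `α`, with `K = λ(α_B)·d_B`. -/
noncomputable def phiA (lam lam' c' : ℝ → ℝ) (dA K : ℝ) (x : ℝ) : ℝ :=
  c' x - lam' x * dA * (dA - (lam x * dA + K) / 2)

lemma hasDerivAt_GA (lam lam' c c' : ℝ → ℝ) (dA K : ℝ)
    (hlamDeriv : ∀ α ∈ Set.Icc (0:ℝ) 1, HasDerivAt lam (lam' α) α)
    (hcDeriv : ∀ α ∈ Set.Ico (0:ℝ) 1, HasDerivAt c (c' α) α)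
    {x : ℝ} (hx : x ∈ Set.Ico (0:ℝ) 1) :
    HasDerivAt (fun t => (dA - (lam t * dA + K) / 2) ^ 2 + c t)
      (phiA lam lam' c' dA K x) x := by
  have h1 := hlamDeriv x ⟨hx.1, hx.2.le⟩
  have h2 := hcDeriv x hx
  have h3 : HasDerivAt (fun t => dA - (lam t * dA + K) / 2)
      (-(lam' x * dA / 2)) x := by
    have := (((h1.mul_const dA).add_const K).div_const 2).const_sub dA
    simpa using this
  have h4 := ((h3.pow 2).add h2 :
    HasDerivAt (fun t => (dA - (lam t * dA + K) / 2) ^ 2 + c t) _ x)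
  exact h4.congr_deriv (by simp only [phiA, Nat.cast_ofNat, pow_one]; ring)

lemma phiA_pos (lam lam' c' : ℝ → ℝ) (dA K : ℝ)
    (hlamMono : StrictMonoOn lam (Set.Icc 0 1))
    (hlam'pos : ∀ α ∈ Set.Icc (0:ℝ) 1, 0 < lam' α)
    (hlam'anti : ∀ x ∈ Set.Icc (0:ℝ) 1, ∀ y ∈ Set.Icc (0:ℝ) 1, x ≤ y → lam' y ≤ lam' x)
    (hc'nonneg : ∀ α ∈ Set.Ico (0:ℝ) 1, 0 ≤ c' α)
    (hc'strictMono : ∀ x ∈ Set.Ico (0:ℝ) 1, ∀ y ∈ Set.Ico (0:ℝ) 1, x < y → c' x < c' y)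
    (hdA : dA ≠ 0)
    {x y : ℝ} (hx : x ∈ Set.Ico (0:ℝ) 1) (hy : y ∈ Set.Ico (0:ℝ) 1) (hxy : x < y)
    (hphix : 0 ≤ phiA lam lam' c' dA K x) : 0 < phiA lam lam' c' dA K y := by
  have hx1 : x ∈ Set.Icc (0:ℝ) 1 := ⟨hx.1, hx.2.le⟩
  have hy1 : y ∈ Set.Icc (0:ℝ) 1 := ⟨hy.1, hy.2.le⟩
  have hlxy : lam x < lam y := hlamMono hx1 hy1 hxy
  have hl'y : 0 < lam' y := hlam'pos y hy1
  have hl'x : 0 < lam' x := hlam'pos x hx1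
  have hl'le : lam' y ≤ lam' x := hlam'anti x hx1 y hy1 hxy.le
  have hcx : 0 ≤ c' x := hc'nonneg x hx
  have hcxy : c' x < c' y := hc'strictMono x hx y hy hxy
  have hdA2 : 0 < dA ^ 2 := pow_two_pos_of_ne_zero hdA
  simp only [phiA] at hphix ⊢
  rcases le_or_gt (dA * (dA - (lam y * dA + K) / 2)) 0 with hB | hB
  · have h1 : lam' y * (dA * (dA - (lam y * dA + K) / 2)) ≤ 0 :=
      mul_nonpos_of_nonneg_of_nonpos hl'y.le hB
    nlinarith
  · have hBx : dA * (dA - (lam y * dA + K) / 2) < dA * (dA - (lam x * dA + K) / 2) := by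
      nlinarith [mul_pos (sub_pos.mpr hlxy) hdA2]
    have h1 : lam' y * (dA * (dA - (lam y * dA + K) / 2))
        ≤ lam' x * (dA * (dA - (lam y * dA + K) / 2)) :=
      mul_le_mul_of_nonneg_right hl'le hB.le
    have h2 : lam' x * (dA * (dA - (lam y * dA + K) / 2))
        < lam' x * (dA * (dA - (lam x * dA + K) / 2)) :=
      (mul_lt_mul_iff_right₀ hl'x).mpr hBx
    nlinarith

lemma fh_iff (lam lam' c' : ℝ → ℝ) (dA dB aB x : ℝ)
    (hdA : dA ≠ 0) (hl : lam' x ≠ 0) :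
    fFun lam lam' c' dA x = hFun lam dA dB aB ↔
      phiA lam lam' c' dA (lam aB * dB) x = 0 := by
  have key : phiA lam lam' c' dA (lam aB * dB) x
      = dA ^ 2 * lam' x / 2 * (fFun lam lam' c' dA x - hFun lam dA dB aB) := by
    simp only [phiA, fFun, hFun]
    field_simp
    ring
  constructor
  · intro h; rw [key, h, sub_self, mul_zero]
  · intro h
    rw [key] at h
    have h2 : dA ^ 2 * lam' x / 2 ≠ 0 :=
      div_ne_zero (mul_ne_zero (pow_ne_zero 2 hdA) hl) two_ne_zero
    rcases mul_eq_zero.mp h with h3 | h3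
    · exact absurd h3 h2
    · exact sub_eq_zero.mp h3

lemma lossA_eq' (lam c : ℝ → ℝ) (thA thB muG : ℝ) (x aB : ℝ) :
    lossA lam c thA thB muG x aB
      = ((thA - muG) - (lam x * (thA - muG) + lam aB * (thB - muG)) / 2) ^ 2 + c x := by
  have h : thA - teamDec lam thA thB muG x aB
      = (thA - muG) - (lam x * (thA - muG) + lam aB * (thB - muG)) / 2 := by
    simp only [teamDec]; ring
  rw [lossA, h]

lemma bestRespG_zero (lam lam' c c' : ℝ → ℝ) (dA K : ℝ)
    (hlamDeriv : ∀ α ∈ Set.Icc (0:ℝ) 1, HasDerivAt lam (lam' α) α)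
    (hcDeriv : ∀ α ∈ Set.Ico (0:ℝ) 1, HasDerivAt c (c' α) α)
    (hlamMono : StrictMonoOn lam (Set.Icc 0 1))
    (hlam'pos : ∀ α ∈ Set.Icc (0:ℝ) 1, 0 < lam' α)
    (hlam'anti : ∀ x ∈ Set.Icc (0:ℝ) 1, ∀ y ∈ Set.Icc (0:ℝ) 1, x ≤ y → lam' y ≤ lam' x)
    (hc'nonneg : ∀ α ∈ Set.Ico (0:ℝ) 1, 0 ≤ c' α)
    (hc'strictMono : ∀ x ∈ Set.Ico (0:ℝ) 1, ∀ y ∈ Set.Ico (0:ℝ) 1, x < y → c' x < c' y)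
    (hdA : dA ≠ 0)
    (hphi0 : 0 ≤ phiA lam lam' c' dA K 0)
    (a : ℝ) (ha : a ∈ Set.Ico (0:ℝ) 1)
    (hmin : ∀ x ∈ Set.Ico (0:ℝ) 1,
      (dA - (lam a * dA + K) / 2) ^ 2 + c a ≤ (dA - (lam x * dA + K) / 2) ^ 2 + c x) :
    a = 0 := by
  by_contra h
  have ha0 : 0 < a := lt_of_le_of_ne ha.1 (Ne.symm h)
  have hmono : StrictMonoOn (fun t => (dA - (lam t * dA + K) / 2) ^ 2 + c t)
      (Set.Ico 0 1) := by
    apply strictMonoOn_of_deriv_pos (convex_Ico 0 1)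
    · intro x hx
      exact (hasDerivAt_GA lam lam' c c' dA K hlamDeriv hcDeriv
        hx).continuousAt.continuousWithinAt
    · intro x hx
      rw [interior_Ico] at hx
      rw [(hasDerivAt_GA lam lam' c c' dA K hlamDeriv hcDeriv
        (Ioo_subset_Ico_self hx)).deriv]
      exact phiA_pos lam lam' c' dA K hlamMono hlam'pos hlam'anti hc'nonneg
        hc'strictMono hdA ⟨le_rfl, one_pos⟩ (Ioo_subset_Ico_self hx) hx.1 hphi0
  have h1 := hmono (show (0:ℝ) ∈ Set.Ico (0:ℝ) 1 from ⟨le_rfl, one_pos⟩) ha ha0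
  have h2 := hmin 0 ⟨le_rfl, one_pos⟩
  simp only at h1
  linarith

lemma bestRespG_interior (lam lam' c c' : ℝ → ℝ) (dA K : ℝ)
    (hlamDeriv : ∀ α ∈ Set.Icc (0:ℝ) 1, HasDerivAt lam (lam' α) α)
    (hcDeriv : ∀ α ∈ Set.Ico (0:ℝ) 1, HasDerivAt c (c' α) α)
    (hlamMono : StrictMonoOn lam (Set.Icc 0 1))
    (hlam'pos : ∀ α ∈ Set.Icc (0:ℝ) 1, 0 < lam' α)
    (hlam'anti : ∀ x ∈ Set.Icc (0:ℝ) 1, ∀ y ∈ Set.Icc (0:ℝ) 1, x ≤ y → lam' y ≤ lam' x)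
    (hc'nonneg : ∀ α ∈ Set.Ico (0:ℝ) 1, 0 ≤ c' α)
    (hc'strictMono : ∀ x ∈ Set.Ico (0:ℝ) 1, ∀ y ∈ Set.Ico (0:ℝ) 1, x < y → c' x < c' y)
    (hdA : dA ≠ 0)
    (hphi0 : phiA lam lam' c' dA K 0 < 0)
    (a : ℝ) (ha : a ∈ Set.Ico (0:ℝ) 1)
    (hmin : ∀ x ∈ Set.Ico (0:ℝ) 1,
      (dA - (lam a * dA + K) / 2) ^ 2 + c a ≤ (dA - (lam x * dA + K) / 2) ^ 2 + c x) :
    a ∈ Set.Ioo (0:ℝ) 1 ∧ phiA lam lam' c' dA K a = 0 ∧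
      ∀ x ∈ Set.Ioo (0:ℝ) 1, phiA lam lam' c' dA K x = 0 → x = a := by
  set G : ℝ → ℝ := fun t => (dA - (lam t * dA + K) / 2) ^ 2 + c t with hG
  have h0mem : (0:ℝ) ∈ Set.Ico (0:ℝ) 1 := ⟨le_rfl, one_pos⟩
  have ha0 : a ≠ 0 := by
    rintro rfl
    have hd0 := hasDerivAt_GA lam lam' c c' dA K hlamDeriv hcDeriv h0mem
    have hs : Tendsto (slope G 0) (𝓝[≠] 0) (𝓝 (phiA lam lam' c' dA K 0)) :=
      hasDerivAt_iff_tendsto_slope.mp hd0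
    have hs' : Tendsto (slope G 0) (𝓝[>] 0) (𝓝 (phiA lam lam' c' dA K 0)) :=
      hs.mono_left (nhdsWithin_mono _ fun x hx => ne_of_gt hx)
    have hev : ∀ᶠ x in 𝓝[>] (0:ℝ), slope G 0 x < 0 :=
      hs'.eventually_lt_const hphi0
    have hIoo : Set.Ioo (0:ℝ) 1 ∈ 𝓝[>] (0:ℝ) :=
      Ioo_mem_nhdsGT_of_mem ⟨le_rfl, one_pos⟩
    obtain ⟨x, hxs, hxI⟩ := (hev.and (eventually_mem_set.mpr hIoo)).exists
    have hx0 : (0:ℝ) < x := hxI.1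
    rw [slope_def_field] at hxs
    have hxs' : (G x - G 0) / (x - 0) < 0 := by
      simpa [div_eq_div_iff] using hxs
    have h3 : G x - G 0 < 0 * (x - 0) := (div_lt_iff₀ (by linarith)).mp hxs'
    have h4 := hmin x ⟨hx0.le, hxI.2⟩
    simp only [hG] at h3 h4
    nlinarith
  have haI : a ∈ Set.Ioo (0:ℝ) 1 := ⟨lt_of_le_of_ne ha.1 (Ne.symm ha0), ha.2⟩
  have hloc : IsLocalMin G a := by
    filter_upwards [isOpen_Ioo.mem_nhds haI] with x hx
    exact hmin x ⟨hx.1.le, hx.2⟩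
  have hphia : phiA lam lam' c' dA K a = 0 :=
    hloc.hasDerivAt_eq_zero
      (hasDerivAt_GA lam lam' c c' dA K hlamDeriv hcDeriv ⟨haI.1.le, haI.2⟩)
  refine ⟨haI, hphia, ?_⟩
  intro x hx hphix
  by_contra hne
  rcases lt_or_gt_of_ne hne with hlt | hlt
  · have := phiA_pos lam lam' c' dA K hlamMono hlam'pos hlam'anti hc'nonneg
      hc'strictMono hdA ⟨hx.1.le, hx.2⟩ ⟨ha.1, ha.2⟩ hlt (le_of_eq hphix.symm)
    rw [hphia] at this
    exact lt_irrefl 0 this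
  · have := phiA_pos lam lam' c' dA K hlamMono hlam'pos hlam'anti hc'nonneg
      hc'strictMono hdA ⟨ha.1, ha.2⟩ ⟨hx.1.le, hx.2⟩ hlt (le_of_eq hphia.symm)
    rw [hphix] at this
    exact lt_irrefl 0 this

/-- Proposition 1, aligned preferences, `κ = d_A/d_B > 0`. -/
theorem bestRespA_aligned
    (lam lam' c c' : ℝ → ℝ)
    (hlamDeriv : ∀ α ∈ Set.Icc (0:ℝ) 1, HasDerivAt lam (lam' α) α)
    (hlam'Cont : ContinuousOn lam' (Set.Icc (0:ℝ) 1))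
    (hlam0 : lam 0 = 0) (hlam1 : lam 1 = 1)
    (hlam'pos : ∀ α ∈ Set.Icc (0:ℝ) 1, 0 < lam' α)
    (hlam'anti : ∀ x ∈ Set.Icc (0:ℝ) 1, ∀ y ∈ Set.Icc (0:ℝ) 1, x ≤ y → lam' y ≤ lam' x)
    (hcDeriv : ∀ α ∈ Set.Ico (0:ℝ) 1, HasDerivAt c (c' α) α)
    (hc'Cont : ContinuousOn c' (Set.Ico (0:ℝ) 1))
    (hc0 : c 0 = 0)
    (hc'nonneg : ∀ α ∈ Set.Ico (0:ℝ) 1, 0 ≤ c' α)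
    (hc'strictMono : ∀ x ∈ Set.Ico (0:ℝ) 1, ∀ y ∈ Set.Ico (0:ℝ) 1, x < y → c' x < c' y)
    (hc'top : Filter.Tendsto c' (nhdsWithin 1 (Set.Iio 1)) Filter.atTop)
    (thA thB muG dA dB : ℝ)
    (hdA : dA = thA - muG) (hdB : dB = thB - muG)
    (hdAne : dA ≠ 0) (hdBne : dB ≠ 0) (halign : dA * dB > 0) :
    -- (i) if `d_A² ≤ p`, Alice never reveals
    ((dA ^ 2 ≤ c' 0 / lam' 0 →
        ∀ aB ∈ Set.Ico (0:ℝ) 1, ∀ a, IsBestRespA lam c thA thB muG a aB → a = 0)) ∧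
    -- (ii) if `d_A²(1 − 1/(2κ)) ≥ p` and `d_A² − λ(α_B)d_Ad_B/2 > p`, the best response is the
    -- unique interior solution of `f_A(α) = h_A(α_B)`
    ((dA ^ 2 * (1 - 1 / (2 * (dA / dB))) ≥ c' 0 / lam' 0 →
        ∀ aB ∈ Set.Ico (0:ℝ) 1, dA ^ 2 - lam aB * dA * dB / 2 > c' 0 / lam' 0 →
          ∀ a, IsBestRespA lam c thA thB muG a aB →
            a ∈ Set.Ioo (0:ℝ) 1 ∧
            fFun lam lam' c' dA a = hFun lam dA dB aB ∧
            ∀ x ∈ Set.Ioo (0:ℝ) 1, fFun lam lam' c' dA x = hFun lam dA dB aB → x = a)) ∧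
    -- (iii) intermediate trigger price: threshold behavior in `λ(α_B)`
    ((dA ^ 2 * (1 - 1 / (2 * (dA / dB))) < c' 0 / lam' 0 ∧ c' 0 / lam' 0 < dA ^ 2 →
        ∀ aB ∈ Set.Ico (0:ℝ) 1, ∀ a, IsBestRespA lam c thA thB muG a aB →
          ((lam aB ≥ (2 * dA ^ 2 - 2 * (c' 0 / lam' 0)) / (dA * dB) → a = 0) ∧
           (lam aB < (2 * dA ^ 2 - 2 * (c' 0 / lam' 0)) / (dA * dB) →
             a ∈ Set.Ioo (0:ℝ) 1 ∧
             fFun lam lam' c' dA a = hFun lam dA dB aB ∧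
             ∀ x ∈ Set.Ioo (0:ℝ) 1, fFun lam lam' c' dA x = hFun lam dA dB aB → x = a)))) := by
  subst hdA; subst hdB
  have hlamMono : StrictMonoOn lam (Set.Icc 0 1) := by
    apply strictMonoOn_of_deriv_pos (convex_Icc 0 1)
    · intro x hx; exact (hlamDeriv x hx).continuousAt.continuousWithinAt
    · intro x hx
      rw [interior_Icc] at hx
      rw [(hlamDeriv x (Ioo_subset_Icc_self hx)).deriv]
      exact hlam'pos x (Ioo_subset_Icc_self hx)
  have hl'0 : 0 < lam' 0 := hlam'pos 0 ⟨le_rfl, zero_le_one⟩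
  have hlamnn : ∀ aB ∈ Set.Ico (0:ℝ) 1, 0 ≤ lam aB := by
    intro aB haB
    rcases eq_or_lt_of_le haB.1 with h | h
    · rw [← h, hlam0]
    · rw [← hlam0]
      exact (hlamMono ⟨le_rfl, zero_le_one⟩ ⟨haB.1, haB.2.le⟩ h).le
  have hminG : ∀ a aB, IsBestRespA lam c thA thB muG a aB →
      ∀ x ∈ Set.Ico (0:ℝ) 1,
        ((thA - muG) - (lam a * (thA - muG) + lam aB * (thB - muG)) / 2) ^ 2 + c a
          ≤ ((thA - muG) - (lam x * (thA - muG) + lam aB * (thB - muG)) / 2) ^ 2 + c x := by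
    intro a aB hbr x hx
    have h := hbr.2 x hx
    rwa [lossA_eq', lossA_eq'] at h
  refine ⟨?_, ?_, ?_⟩
  · -- (i)
    intro hple aB haB a hbr
    have hK : 0 ≤ lam aB * ((thA - muG) * (thB - muG)) :=
      mul_nonneg (hlamnn aB haB) halign.le
    have hc0' : (thA - muG) ^ 2 * lam' 0 ≤ c' 0 := (le_div_iff₀ hl'0).mp hple
    apply bestRespG_zero lam lam' c c' (thA - muG) (lam aB * (thB - muG)) hlamDeriv
      hcDeriv hlamMono hlam'pos hlam'anti hc'nonneg hc'strictMono hdAne ?_ a hbr.1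
      (hminG a aB hbr)
    simp only [phiA, hlam0]
    nlinarith [mul_nonneg hl'0.le hK]
  · -- (ii)
    intro _ aB haB hgt a hbr
    have hphi0 : phiA lam lam' c' (thA - muG) (lam aB * (thB - muG)) 0 < 0 := by
      have h1 := (div_lt_iff₀ hl'0).mp hgt
      simp only [phiA, hlam0]
      nlinarith [h1]
    obtain ⟨haI, hphia, huniq⟩ := bestRespG_interior lam lam' c c' (thA - muG)
      (lam aB * (thB - muG)) hlamDeriv hcDeriv hlamMono hlam'pos hlam'anti hc'nonneg
      hc'strictMono hdAne hphi0 a hbr.1 (hminG a aB hbr)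
    have hl'a : lam' a ≠ 0 := (hlam'pos a ⟨haI.1.le, haI.2.le⟩).ne'
    refine ⟨haI, (fh_iff lam lam' c' _ _ aB a hdAne hl'a).mpr hphia, ?_⟩
    intro x hx hfx
    have hl'x : lam' x ≠ 0 := (hlam'pos x ⟨hx.1.le, hx.2.le⟩).ne'
    exact huniq x hx ((fh_iff lam lam' c' _ _ aB x hdAne hl'x).mp hfx)
  · -- (iii)
    rintro ⟨hlt1, hlt2⟩ aB haB a hbr
    have hp : c' 0 / lam' 0 * lam' 0 = c' 0 := div_mul_cancel₀ _ hl'0.ne'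
    constructor
    · intro hge
      have h1 : 2 * (thA - muG) ^ 2 - 2 * (c' 0 / lam' 0)
          ≤ lam aB * ((thA - muG) * (thB - muG)) := (div_le_iff₀ halign).mp hge
      apply bestRespG_zero lam lam' c c' (thA - muG) (lam aB * (thB - muG)) hlamDeriv
        hcDeriv hlamMono hlam'pos hlam'anti hc'nonneg hc'strictMono hdAne ?_ a hbr.1
        (hminG a aB hbr)
      simp only [phiA, hlam0]
      nlinarith [mul_le_mul_of_nonneg_left h1 hl'0.le, hp]
    · intro hlt3
      have h1 : lam aB * ((thA - muG) * (thB - muG))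
          < 2 * (thA - muG) ^ 2 - 2 * (c' 0 / lam' 0) := (lt_div_iff₀ halign).mp hlt3
      have hphi0 : phiA lam lam' c' (thA - muG) (lam aB * (thB - muG)) 0 < 0 := by
        simp only [phiA, hlam0]
        nlinarith [mul_lt_mul_of_pos_left h1 hl'0, hp]
      obtain ⟨haI, hphia, huniq⟩ := bestRespG_interior lam lam' c c' (thA - muG)
        (lam aB * (thB - muG)) hlamDeriv hcDeriv hlamMono hlam'pos hlam'anti hc'nonneg
        hc'strictMono hdAne hphi0 a hbr.1 (hminG a aB hbr)
      have hl'a : lam' a ≠ 0 := (hlam'pos a ⟨haI.1.le, haI.2.le⟩).ne'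
      refine ⟨haI, (fh_iff lam lam' c' _ _ aB a hdAne hl'a).mpr hphia, ?_⟩
      intro x hx hfx
      have hl'x : lam' x ≠ 0 := (hlam'pos x ⟨hx.1.le, hx.2.le⟩).ne'
      exact huniq x hx ((fh_iff lam lam' c' _ _ aB x hdAne hl'x).mp hfx)
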